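/- Let Q_n be the type II Hermite–Padé polynomial of a Nikishin system 𝓝(σ₁,…,σ_m) for a decreasing multi-index n, and define Ψ_{n,0} = Q_n and Ψ_{n,k}(z) = ∫ Ψ_{n,k−1}(x)/(z−x) dσₖ(x). Then for every k = 1,…,m and every j = k,…,m, ∫ xᵛ Ψ_{n,k−1}(x) ds_{k,j}(x) = 0 for ν = 0,…,nⱼ−1. -/

import Mathlib

open MeasureTheory Polynomial

/-- Topological support of a measure on ℝ. -/
def msupport (σ : Measure ℝ) : Set ℝ := {x : ℝ | ∀ U ∈ nhds x, σ U ≠ 0}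

/-- Iterated Cauchy transform of a chain of measures. -/
noncomputable def chainT (σ : ℕ → Measure ℝ) : List ℕ → ℂ → ℂ
  | [] => fun _ => 1
  | [i] => fun z => ∫ x, (z - (x : ℂ))⁻¹ ∂(σ i)
  | i :: j :: l => fun z => ∫ x, chainT σ (j :: l) x / (z - x) ∂(σ i)

/-- `ŝ_{j,k}` for the Nikishin system generated by `σ j, σ (j+1), …` (here `j ≤ k`). -/
noncomputable def shat (σ : ℕ → Measure ℝ) (j k : ℕ) : ℂ → ℂ :=
  chainT σ (List.range' j (k + 1 - j))

/-- `Ψ_{n,0} = Q_n` and `Ψ_{n,k}(z) = ∫ Ψ_{n,k-1}(x)/(z-x) dσₖ(x)`. -/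
noncomputable def Psi (σ : ℕ → Measure ℝ) (Q : Polynomial ℝ) : ℕ → ℂ → ℂ
  | 0 => fun z => (Q.map (algebraMap ℝ ℂ)).eval z
  | (k + 1) => fun z => ∫ x, Psi σ Q k x / (z - x) ∂(σ (k + 1))

/-! ### Auxiliary lemmas -/

lemma msupport_compl_null (σ : Measure ℝ) : σ (msupport σ)ᶜ = 0 := by
  obtain ⟨b, hbc, -, hb⟩ := TopologicalSpace.exists_countable_basis ℝ
  have hsub : (msupport σ)ᶜ ⊆ ⋃ s ∈ {s ∈ b | σ s = 0}, s := by
    intro x hx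
    simp only [Set.mem_compl_iff, msupport, Set.mem_setOf_eq, not_forall] at hx
    obtain ⟨U, hU, hU0⟩ := hx
    push_neg at hU0
    obtain ⟨V, hVb, hxV, hVU⟩ := hb.mem_nhds_iff.mp hU
    exact Set.mem_biUnion ⟨hVb, measure_mono_null hVU hU0⟩ hxV
  refine measure_mono_null hsub (measure_biUnion_null_iff ?_ |>.mpr ?_)
  · exact hbc.mono (by intro s hs; exact hs.1)
  · exact fun s hs => hs.2

lemma aemem_of_compl_null {μ : Measure ℝ} {s : Set ℝ} (h : μ sᶜ = 0) : ∀ᵐ x ∂μ, x ∈ s := by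
  rw [MeasureTheory.ae_iff]; exact h

lemma aesm_of_contOn {μ : Measure ℝ} {s : Set ℝ} (hs : MeasurableSet s) (h : μ sᶜ = 0)
    {f : ℝ → ℂ} (hf : ContinuousOn f s) : AEStronglyMeasurable f μ := by
  have h1 : μ.restrict s = μ := Measure.restrict_eq_self_of_ae_mem (aemem_of_compl_null h)
  have h2 : AEStronglyMeasurable f (μ.restrict s) := hf.aestronglyMeasurable hs
  rwa [h1] at h2

lemma integrable_of_contOn {μ : Measure ℝ} [IsFiniteMeasure μ] {a b : ℝ}
    (h : μ (Set.Icc a b)ᶜ = 0) {f : ℝ → ℂ} (hf : ContinuousOn f (Set.Icc a b)) :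
    Integrable f μ := by
  obtain ⟨C, hC⟩ := IsCompact.exists_bound_of_continuousOn isCompact_Icc hf
  refine Integrable.mono' (integrable_const C) (aesm_of_contOn measurableSet_Icc h hf) ?_
  filter_upwards [aemem_of_compl_null h] with x hx using hC x hx

lemma gap_lemma {a b c d : ℝ} (hab : a ≤ b) (hcd : c ≤ d)
    (h : Disjoint (Set.Icc a b) (Set.Icc c d)) :
    ∃ δ > 0, ∀ x ∈ Set.Icc a b, ∀ y ∈ Set.Icc c d, δ ≤ |x - y| := by
  have hcase : b < c ∨ d < a := by
    by_contra hc
    push_neg at hc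
    exact (h.ne_of_mem (Set.mem_Icc.mpr ⟨le_max_left a c, max_le hab hc.1⟩)
      (Set.mem_Icc.mpr ⟨le_max_right a c, max_le hc.2 hcd⟩)) rfl
  rcases hcase with hbc | hda
  · exact ⟨c - b, by linarith, fun x hx y hy => by
      rw [abs_sub_comm, abs_of_nonneg (by cases hx; cases hy; linarith)]
      cases hx; cases hy; linarith⟩
  · exact ⟨a - d, by linarith, fun x hx y hy => by
      rw [abs_of_nonneg (by cases hx; cases hy; linarith)]
      cases hx; cases hy; linarith⟩

lemma key_id {x t : ℂ} (hxt : x ≠ t) (c : ℂ) (ν : ℕ) :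
    x ^ ν * c * (x - t)⁻¹ =
      (∑ i ∈ Finset.range ν, x ^ i * t ^ (ν - 1 - i)) * c + t ^ ν * (c * (x - t)⁻¹) := by
  have h := geom_sum₂_mul x t ν
  have hne : x - t ≠ 0 := sub_ne_zero.mpr hxt
  field_simp
  linear_combination (-c) * h

lemma cauchyCont (μ : Measure ℝ) [IsFiniteMeasure μ] (K : Set ℝ) (hKne : K.Nonempty)
    (hKcomp : IsCompact K) (hμ : μ Kᶜ = 0) (g : ℝ → ℂ) (hg : AEStronglyMeasurable g μ)
    (C : ℝ) (hb : ∀ᵐ x ∂μ, ‖g x‖ ≤ C)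
    {z₀ : ℂ} (hz : z₀ ∉ (Complex.ofReal '' K)) :
    ContinuousAt (fun z => ∫ x, g x / (z - x) ∂μ) z₀ := by
  set Kc : Set ℂ := Complex.ofReal '' K with hKc
  have hKcc : IsCompact Kc := hKcomp.image Complex.continuous_ofReal
  have hKcl : IsClosed Kc := hKcc.isClosed
  have hKcn : Kc.Nonempty := hKne.image _
  have hδ : 0 < Metric.infDist z₀ Kc := by
    rw [← hKcl.notMem_iff_infDist_pos hKcn] at *; exact hz
  set δ := Metric.infDist z₀ Kc with hδdef
  have haeK : ∀ᵐ x ∂μ, x ∈ K := by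
    rw [MeasureTheory.ae_iff]; exact hμ
  apply MeasureTheory.continuousAt_of_dominated (bound := fun _ => max C 0 / (δ/2))
  · filter_upwards with z
    exact hg.mul ((Complex.measurable_ofReal.const_sub z).inv.aemeasurable.aestronglyMeasurable)
      |>.congr (by filter_upwards with x; simp [div_eq_mul_inv])
  · filter_upwards [Metric.ball_mem_nhds z₀ (half_pos hδ)] with z hzball
    filter_upwards [haeK, hb] with x hxK hxb
    have hdist : δ ≤ dist z₀ ((x : ℝ) : ℂ) := Metric.infDist_le_dist_of_mem ⟨x, hxK, rfl⟩
    have h2 : δ/2 ≤ ‖z - (x:ℂ)‖ := by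
      have := dist_triangle z₀ z ((x:ℝ):ℂ)
      rw [Metric.mem_ball, dist_eq_norm] at hzball
      rw [dist_eq_norm, dist_eq_norm, dist_eq_norm] at *
      have h3 : ‖z₀ - z‖ = ‖z - z₀‖ := norm_sub_rev _ _
      nlinarith [this]
    rw [norm_div]
    apply div_le_div₀ (le_max_right C 0) (le_trans hxb (le_max_left C 0)) (half_pos hδ) h2
  · exact integrable_const _
  · filter_upwards [haeK] with x hxK
    have hne : z₀ - (x:ℂ) ≠ 0 := by
      intro h
      exact hz ⟨x, hxK, by rw [sub_eq_zero] at h; exact h.symm⟩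
    exact ContinuousAt.div continuousAt_const (continuousAt_id.sub continuousAt_const) hne

lemma cauchy_transform_contOn (μ : Measure ℝ) [IsFiniteMeasure μ] (a b : ℝ) (hab : a ≤ b)
    (hμ : μ (Set.Icc a b)ᶜ = 0) (g : ℝ → ℂ) (hg : ContinuousOn g (Set.Icc a b)) :
    ContinuousOn (fun z => ∫ x, g x / (z - x) ∂μ) ((Complex.ofReal '' Set.Icc a b)ᶜ) := by
  obtain ⟨C, hC⟩ := isCompact_Icc.exists_bound_of_continuousOn hg
  intro z hz
  exact (cauchyCont μ _ (Set.nonempty_Icc.mpr hab) isCompact_Icc hμ g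
    (aesm_of_contOn measurableSet_Icc hμ hg) C
    (by filter_upwards [aemem_of_compl_null hμ] with x hx using hC x hx) hz).continuousWithinAt

lemma shat_single (σ : ℕ → Measure ℝ) (p : ℕ) :
    shat σ p p = fun z => ∫ x, (z - (x : ℂ))⁻¹ ∂(σ p) := by
  have h : p + 1 - p = 1 := by omega
  rw [shat, h, List.range'_one]
  rfl

lemma shat_cons (σ : ℕ → Measure ℝ) (p q : ℕ) (h : p < q) :
    shat σ p q = fun z => ∫ x, shat σ (p + 1) q x / (z - x) ∂(σ p) := by
  have h1 : q + 1 - p = (q - p - 1 + 1) + 1 := by omega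
  have h2 : q + 1 - (p + 1) = q - p - 1 + 1 := by omega
  rw [shat, shat, h1, h2, List.range'_succ, List.range'_succ]
  rfl

lemma Psi_succ_eval (σ : ℕ → Measure ℝ) (Q : Polynomial ℝ) (k : ℕ) (hk : 1 ≤ k) (z : ℂ) :
    Psi σ Q k z = ∫ x, Psi σ Q (k - 1) x / (z - x) ∂(σ k) := by
  obtain ⟨k', rfl⟩ : ∃ k', k = k' + 1 := ⟨k - 1, by omega⟩
  rfl

lemma ae_prod_mem {μ ν : Measure ℝ} [SFinite μ] [SFinite ν] {s t : Set ℝ}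
    (hs : μ sᶜ = 0) (ht : ν tᶜ = 0) : ∀ᵐ q ∂(μ.prod ν), q.1 ∈ s ∧ q.2 ∈ t := by
  rw [MeasureTheory.ae_iff]
  refine measure_mono_null (fun q hq => ?_) (?_ : (μ.prod ν) (sᶜ ×ˢ Set.univ ∪ Set.univ ×ˢ tᶜ) = 0)
  · simp only [Set.mem_setOf_eq, not_and_or] at hq
    rcases hq with h | h
    · exact Or.inl ⟨h, Set.mem_univ _⟩
    · exact Or.inr ⟨Set.mem_univ _, h⟩
  · refine measure_union_null ?_ ?_ <;> rw [Measure.prod_prod]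
    · rw [hs, zero_mul]
    · rw [ht, mul_zero]

/-- for the type II Hermite–Padé polynomial of a Nikishin system with a
decreasing multi-index, `∫ xᵛ Ψ_{n,k-1}(x) ds_{k,j}(x) = 0` for every `k = 1,…,m`,
`j = k,…,m` and `ν < nⱼ`, where `ds_{k,j} = ŝ_{k+1,j} dσₖ`. -/
theorem stmt10 (m : ℕ) (hm : 1 ≤ m) (A B : ℕ → ℝ) (hAB : ∀ j, A j ≤ B j)
    (hdisj : ∀ j, 1 ≤ j → j < m → Disjoint (Set.Icc (A j) (B j)) (Set.Icc (A (j+1)) (B (j+1))))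
    (σ : ℕ → Measure ℝ) [∀ j, IsFiniteMeasure (σ j)]
    (hsupp : ∀ j, 1 ≤ j → j ≤ m → msupport (σ j) ⊆ Set.Icc (A j) (B j))
    (hco : ∀ j, 1 ≤ j → j ≤ m → convexHull ℝ (msupport (σ j)) = Set.Icc (A j) (B j))
    (hinf : ∀ j, 1 ≤ j → j ≤ m → (msupport (σ j)).Infinite)
    (n : ℕ → ℕ) (hdec : ∀ j, 1 ≤ j → j < m → n (j + 1) ≤ n j)
    (Q : Polynomial ℝ) (hQ : Q ≠ 0) (hdeg : Q.natDegree ≤ ∑ k ∈ Finset.Icc 1 m, n k)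
    -- defining type II orthogonality (the case `k = 1`):
    (horth : ∀ j, 1 ≤ j → j ≤ m → ∀ ν < n j,
      ∫ x, (x : ℂ) ^ ν * Psi σ Q 0 x * (if j = 1 then 1 else shat σ 2 j x) ∂(σ 1) = 0) :
    ∀ k, 1 ≤ k → k ≤ m → ∀ j, k ≤ j → j ≤ m → ∀ ν < n j,
      ∫ x, (x : ℂ) ^ ν * Psi σ Q (k - 1) x *
          (if j = k then 1 else shat σ (k + 1) j x) ∂(σ k) = 0 := by
  have hnull : ∀ q, 1 ≤ q → q ≤ m → σ q (Set.Icc (A q) (B q))ᶜ = 0 := fun q h1 h2 =>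
    measure_mono_null (Set.compl_subset_compl.mpr (hsupp q h1 h2)) (msupport_compl_null (σ q))
  have himg : ∀ p, 1 ≤ p → p < m → ∀ x ∈ Set.Icc (A p) (B p),
      (x : ℂ) ∉ Complex.ofReal '' Set.Icc (A (p+1)) (B (p+1)) := by
    rintro p hp1 hpm x hx ⟨y, hy, hxy⟩
    have hxy' : y = x := Complex.ofReal_inj.mp hxy
    subst hxy'
    exact (hdisj p hp1 hpm).ne_of_mem hx hy rfl
  have himg' : ∀ p, 1 ≤ p → p < m → ∀ x ∈ Set.Icc (A (p+1)) (B (p+1)),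
      (x : ℂ) ∉ Complex.ofReal '' Set.Icc (A p) (B p) := by
    rintro p hp1 hpm x hx ⟨y, hy, hxy⟩
    have hxy' : y = x := Complex.ofReal_inj.mp hxy
    subst hxy'
    exact (hdisj p hp1 hpm).ne_of_mem hy hx rfl
  -- continuity of the chain transforms
  have hshatC : ∀ d p, 1 ≤ p → p + d ≤ m →
      ContinuousOn (shat σ p (p + d)) ((Complex.ofReal '' Set.Icc (A p) (B p))ᶜ) := by
    intro d
    induction d with
    | zero =>
      intro p hp1 hpm
      rw [Nat.add_zero, shat_single]
      have heq : (fun z : ℂ => ∫ x, (z - (x : ℂ))⁻¹ ∂(σ p))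
          = fun z => ∫ x, (1 : ℂ) / (z - (x : ℂ)) ∂(σ p) := by
        simp only [one_div]
      rw [heq]
      exact cauchy_transform_contOn (σ p) _ _ (hAB p) (hnull p hp1 hpm) _ continuousOn_const
    | succ d ih =>
      intro p hp1 hpm
      rw [shat_cons σ p (p + (d+1)) (by omega)]
      have hpd : p + 1 + d = p + (d + 1) := by omega
      have hprev : ContinuousOn (shat σ (p+1) (p + (d+1)))
          ((Complex.ofReal '' Set.Icc (A (p+1)) (B (p+1)))ᶜ) := by
        have := ih (p+1) (by omega) (by omega)
        rwa [hpd] at this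
      have hcont : ContinuousOn (fun x : ℝ => shat σ (p+1) (p + (d+1)) x)
          (Set.Icc (A p) (B p)) :=
        hprev.comp Complex.continuous_ofReal.continuousOn
          (fun x hx => himg p hp1 (by omega) x hx)
      exact cauchy_transform_contOn (σ p) _ _ (hAB p) (hnull p hp1 (by omega)) _ hcont
  have hshatC' : ∀ p q, 1 ≤ p → p ≤ q → q ≤ m →
      ContinuousOn (shat σ p q) ((Complex.ofReal '' Set.Icc (A p) (B p))ᶜ) := by
    intro p q hp1 hpq hqm
    have h : p + (q - p) = q := by omega
    have := hshatC (q - p) p hp1 (by omega)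
    rwa [h] at this
  -- continuity of Psi on the next interval
  have hPsiR : ∀ r, r + 1 ≤ m →
      ContinuousOn (fun t : ℝ => Psi σ Q r t) (Set.Icc (A (r+1)) (B (r+1))) := by
    intro r
    induction r with
    | zero =>
      intro _
      exact ((Q.map (algebraMap ℝ ℂ)).continuous.comp Complex.continuous_ofReal).continuousOn
    | succ r ih =>
      intro hrm
      have hprevC : ContinuousOn (fun t : ℝ => Psi σ Q r t) (Set.Icc (A (r+1)) (B (r+1))) :=
        ih (by omega)
      have hc : ContinuousOn (Psi σ Q (r+1))
          ((Complex.ofReal '' Set.Icc (A (r+1)) (B (r+1)))ᶜ) := by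
        show ContinuousOn (fun z => ∫ x, Psi σ Q r x / (z - x) ∂(σ (r+1))) _
        exact cauchy_transform_contOn (σ (r+1)) _ _ (hAB (r+1))
          (hnull (r+1) (by omega) (by omega)) _ hprevC
      exact hc.comp Complex.continuous_ofReal.continuousOn
        (fun x hx => himg' (r+1) (by omega) (by omega) x hx)
  -- monotonicity of n
  have hmono : ∀ a b, 1 ≤ a → a ≤ b → b ≤ m → n b ≤ n a := by
    intro a b ha1 hab hbm
    induction b with
    | zero => omega
    | succ b ihb =>
      rcases Nat.lt_or_ge a (b+1) with hlt | hge
      · exact le_trans (hdec b (by omega) (by omega)) (ihb (by omega) (by omega))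
      · have : a = b + 1 := by omega
        subst this; exact le_rfl
  -- main induction on k
  intro k
  induction k with
  | zero => intro h; omega
  | succ k ih =>
    intro _ hkm j hkj hjm ν hν
    rcases Nat.eq_zero_or_pos k with hk0 | hkpos
    · subst hk0
      exact horth j (by omega) hjm ν hν
    -- inductive step: k ≥ 1
    have hk1 : 1 ≤ k := hkpos
    have hkm' : k ≤ m := by omega
    have hkmlt : k < m := by omega
    have hadd : k + 1 + 1 = k + 2 := by omega
    have hjk : j ≠ k := by omega
    have hnjk : n j ≤ n k := hmono k j hk1 (by omega) hjm
    set Δ0 := Set.Icc (A k) (B k) with hΔ0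
    set Δ1 := Set.Icc (A (k+1)) (B (k+1)) with hΔ1
    have hnull0 : σ k Δ0ᶜ = 0 := hnull k hk1 hkm'
    have hnull1 : σ (k+1) Δ1ᶜ = 0 := hnull (k+1) (by omega) hkm
    set g : ℝ → ℂ := fun t => Psi σ Q (k-1) t with hgdef
    set h : ℝ → ℂ := fun x => if j = k + 1 then 1 else shat σ (k+2) j x with hhdef
    set φ : ℝ → ℂ := fun x => (x:ℂ) ^ ν * h x with hφdef
    set S : ℝ → ℂ := fun t => shat σ (k+1) j t with hSdef
    -- continuity facts
    have hgC : ContinuousOn g Δ0 := by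
      have := hPsiR (k-1) (by omega)
      have he : k - 1 + 1 = k := by omega
      rw [he] at this
      exact this
    have hhC : ContinuousOn h Δ1 := by
      by_cases hj : j = k + 1
      · simp only [hhdef, hj, if_pos rfl]; exact continuousOn_const
      · have hj2 : k + 2 ≤ j := by omega
        simp only [hhdef, if_neg hj]
        exact (hshatC' (k+2) j (by omega) hj2 hjm).comp
          Complex.continuous_ofReal.continuousOn
          (fun x hx => himg (k+1) (by omega) (by omega) x hx)
    have hφC : ContinuousOn φ Δ1 :=
      ((Complex.continuous_ofReal.pow ν).continuousOn).mul hhC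
    have hSC : ContinuousOn S Δ0 :=
      (hshatC' (k+1) j (by omega) (by omega) hjm).comp
        Complex.continuous_ofReal.continuousOn
        (fun x hx => himg k hk1 hkmlt x hx)
    -- the representation of shat σ (k+1) j via h
    have hSrep : ∀ z : ℂ, shat σ (k+1) j z = ∫ x, h x / (z - x) ∂(σ (k+1)) := by
      intro z
      by_cases hj : j = k + 1
      · subst hj
        rw [shat_single]
        refine integral_congr_ae (Filter.Eventually.of_forall fun x => ?_)
        beta_reduce
        simp [hhdef]
      · rw [shat_cons σ (k+1) j (by omega), hadd]
        refine integral_congr_ae (Filter.Eventually.of_forall fun x => ?_)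
        beta_reduce
        simp only [hhdef, if_neg hj]
    -- separation of the two intervals
    obtain ⟨δ, hδpos, hδ⟩ := gap_lemma (hAB (k+1)) (hAB k) (hdisj k hk1 hkmlt).symm
    have hne : ∀ x ∈ Δ1, ∀ t ∈ Δ0, (x:ℂ) ≠ (t:ℂ) := by
      intro x hx t ht hxt
      have hxx : x = t := Complex.ofReal_inj.mp hxt
      subst hxx
      have hcon := hδ x hx x ht
      simp only [sub_self, abs_zero] at hcon
      linarith
    -- bounds
    obtain ⟨Cφ, hCφ⟩ := isCompact_Icc.exists_bound_of_continuousOn hφC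
    obtain ⟨Cg, hCg⟩ := isCompact_Icc.exists_bound_of_continuousOn hgC
    have hφm : AEStronglyMeasurable φ (σ (k+1)) := aesm_of_contOn measurableSet_Icc hnull1 hφC
    have hgm : AEStronglyMeasurable g (σ k) := aesm_of_contOn measurableSet_Icc hnull0 hgC
    -- product integrability
    have hF : Integrable (Function.uncurry fun x t => φ x * (g t * ((x:ℂ) - (t:ℂ))⁻¹))
        ((σ (k+1)).prod (σ k)) := by
      have hmeas : AEStronglyMeasurable
          (fun q : ℝ × ℝ => φ q.1 * (g q.2 * ((q.1:ℂ) - (q.2:ℂ))⁻¹))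
          ((σ (k+1)).prod (σ k)) := by
        refine hφm.comp_fst.mul (hgm.comp_snd.mul ?_)
        exact (((Complex.measurable_ofReal.comp measurable_fst).sub
          (Complex.measurable_ofReal.comp measurable_snd)).inv).aestronglyMeasurable
      refine Integrable.mono' (integrable_const ((max Cφ 0) * (max Cg 0 * δ⁻¹))) hmeas ?_
      filter_upwards [ae_prod_mem hnull1 hnull0] with q hq
      obtain ⟨hq1, hq2⟩ := hq
      have hxb : ‖φ q.1‖ ≤ max Cφ 0 := le_trans (hCφ _ hq1) (le_max_left _ _)
      have htb : ‖g q.2‖ ≤ max Cg 0 := le_trans (hCg _ hq2) (le_max_left _ _)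
      have hib : ‖((q.1:ℂ) - (q.2:ℂ))⁻¹‖ ≤ δ⁻¹ := by
        rw [norm_inv]
        have h1 : δ ≤ ‖(q.1:ℂ) - (q.2:ℂ)‖ := by
          rw [← Complex.ofReal_sub, Complex.norm_real, Real.norm_eq_abs]
          exact hδ _ hq1 _ hq2
        exact inv_anti₀ hδpos h1
      show ‖φ q.1 * (g q.2 * ((q.1:ℂ) - (q.2:ℂ))⁻¹)‖ ≤ (max Cφ 0) * (max Cg 0 * δ⁻¹)
      have hnn : ‖φ q.1 * (g q.2 * ((q.1:ℂ) - (q.2:ℂ))⁻¹)‖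
          = ‖φ q.1‖ * (‖g q.2‖ * ‖((q.1:ℂ) - (q.2:ℂ))⁻¹‖) := by
        rw [norm_mul (φ q.1), norm_mul (g q.2)]
      rw [hnn]
      have hδinv : (0:ℝ) ≤ δ⁻¹ := by positivity
      gcongr
    -- moments of h
    set c : ℕ → ℂ := fun i => ∫ x, (x:ℂ) ^ i * h x ∂(σ (k+1)) with hcdef
    -- step 1: rewrite integrand using the definition of Psi (k+1 = k.succ ≥ 1)
    have step1 : ∫ x, (x:ℂ) ^ ν * Psi σ Q (k + 1 - 1) x *
          (if j = k + 1 then 1 else shat σ (k + 1 + 1) j x) ∂(σ (k+1))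
        = ∫ x, ∫ t, φ x * (g t * ((x:ℂ) - (t:ℂ))⁻¹) ∂(σ k) ∂(σ (k+1)) := by
      refine integral_congr_ae (Filter.Eventually.of_forall fun x => ?_)
      beta_reduce
      have hPsieq : Psi σ Q (k + 1 - 1) (x:ℂ) = ∫ t, g t / ((x:ℂ) - t) ∂(σ k) := by
        simp only [Nat.add_sub_cancel]
        rw [Psi_succ_eval σ Q k hk1]
      rw [hPsieq, hadd]
      have : (x:ℂ) ^ ν * (∫ t, g t / ((x:ℂ) - t) ∂(σ k)) * h x
          = φ x * ∫ t, g t / ((x:ℂ) - t) ∂(σ k) := by rw [hφdef]; ring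
      rw [show (if j = k + 1 then (1:ℂ) else shat σ (k+2) j x) = h x from rfl, this,
        ← integral_const_mul]
      refine integral_congr_ae (Filter.Eventually.of_forall fun t => ?_)
      beta_reduce
      rw [div_eq_mul_inv]
    -- step 2: Fubini
    have step2 : ∫ x, ∫ t, φ x * (g t * ((x:ℂ) - (t:ℂ))⁻¹) ∂(σ k) ∂(σ (k+1))
        = ∫ t, ∫ x, φ x * (g t * ((x:ℂ) - (t:ℂ))⁻¹) ∂(σ (k+1)) ∂(σ k) :=
      integral_integral_swap hF
    -- step 3: evaluate the inner integral for a.e. t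
    have hinner : ∀ᵐ t ∂(σ k),
        (∫ x, φ x * (g t * ((x:ℂ) - (t:ℂ))⁻¹) ∂(σ (k+1)))
        = g t * ((∑ i ∈ Finset.range ν, (t:ℂ) ^ (ν - 1 - i) * c i) - (t:ℂ) ^ ν * S t) := by
      filter_upwards [aemem_of_compl_null hnull0] with t ht
      have hrearr : (fun x : ℝ => φ x * (g t * ((x:ℂ) - (t:ℂ))⁻¹))
          = fun x => g t * (φ x * ((x:ℂ) - (t:ℂ))⁻¹) := by
        funext x; ring
      rw [hrearr, integral_const_mul]
      congr 1
      have hptw : ∀ᵐ x ∂(σ (k+1)), φ x * ((x:ℂ) - (t:ℂ))⁻¹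
          = (∑ i ∈ Finset.range ν, (x:ℂ)^i * (t:ℂ)^(ν-1-i)) * h x
            + (t:ℂ)^ν * (h x * ((x:ℂ) - (t:ℂ))⁻¹) := by
        filter_upwards [aemem_of_compl_null hnull1] with x hx
        have hk := key_id (hne x hx t ht) (h x) ν
        simp only [hφdef]
        exact hk
      rw [integral_congr_ae hptw]
      have hcont_inv : ContinuousOn (fun x : ℝ => ((x:ℂ) - (t:ℂ))⁻¹) Δ1 := by
        refine ContinuousOn.inv₀
          ((Complex.continuous_ofReal.continuousOn).sub continuousOn_const) ?_
        intro x hx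
        exact sub_ne_zero.mpr (hne x hx t ht)
      have hint1 : Integrable
          (fun x : ℝ => (∑ i ∈ Finset.range ν, (x:ℂ)^i * (t:ℂ)^(ν-1-i)) * h x) (σ (k+1)) := by
        refine integrable_of_contOn hnull1 (ContinuousOn.mul ?_ hhC)
        exact (continuous_finset_sum _ fun i _ =>
          (Complex.continuous_ofReal.pow i).mul continuous_const).continuousOn
      have hint2 : Integrable
          (fun x : ℝ => (t:ℂ)^ν * (h x * ((x:ℂ) - (t:ℂ))⁻¹)) (σ (k+1)) :=
        integrable_of_contOn hnull1 (continuousOn_const.mul (hhC.mul hcont_inv))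
      rw [integral_add hint1 hint2]
      have e1 : ∫ x, (∑ i ∈ Finset.range ν, (x:ℂ)^i * (t:ℂ)^(ν-1-i)) * h x ∂(σ (k+1))
          = ∑ i ∈ Finset.range ν, (t:ℂ)^(ν-1-i) * c i := by
        have hsw : (fun x : ℝ => (∑ i ∈ Finset.range ν, (x:ℂ)^i * (t:ℂ)^(ν-1-i)) * h x)
            = fun x : ℝ => ∑ i ∈ Finset.range ν, (t:ℂ)^(ν-1-i) * ((x:ℂ)^i * h x) := by
          funext x; rw [Finset.sum_mul]; exact Finset.sum_congr rfl fun i _ => by ring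
        rw [hsw, integral_finset_sum]
        · exact Finset.sum_congr rfl fun i _ => by rw [integral_const_mul, hcdef]
        · intro i _
          exact integrable_of_contOn hnull1 (continuousOn_const.mul
            (((Complex.continuous_ofReal.pow i).continuousOn).mul hhC))
      have e2 : ∫ x, (t:ℂ)^ν * (h x * ((x:ℂ) - (t:ℂ))⁻¹) ∂(σ (k+1)) = -((t:ℂ)^ν * S t) := by
        rw [integral_const_mul]
        have hinn : ∫ x, h x * ((x:ℂ) - (t:ℂ))⁻¹ ∂(σ (k+1)) = - S t := by
          have hptw2 : (fun x : ℝ => h x * ((x:ℂ) - (t:ℂ))⁻¹)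
              = fun x => -(h x / ((t:ℂ) - (x:ℂ))) := by
            funext x
            rw [div_eq_mul_inv, show ((x:ℂ) - (t:ℂ)) = -((t:ℂ) - (x:ℂ)) by ring, inv_neg]
            ring
          rw [hptw2, integral_neg]
          simp only [hSdef]
          rw [hSrep (t:ℂ)]
        rw [hinn]; ring
      rw [e1, e2]
      ring
    have step3 : ∫ t, ∫ x, φ x * (g t * ((x:ℂ) - (t:ℂ))⁻¹) ∂(σ (k+1)) ∂(σ k)
        = ∫ t, g t * ((∑ i ∈ Finset.range ν, (t:ℂ)^(ν-1-i) * c i) - (t:ℂ)^ν * S t) ∂(σ k) :=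
      integral_congr_ae hinner
    -- final: expand and use the induction hypothesis
    have hIH0 : ∀ μ', μ' < n k → ∫ t, (t:ℂ)^μ' * g t ∂(σ k) = 0 := by
      intro μ' hμ'
      have hI := ih hk1 hkm' k le_rfl hkm' μ' hμ'
      simp only [eq_self_iff_true, if_true, mul_one] at hI
      simpa only [hgdef] using hI
    have hIHj : ∫ t, (t:ℂ)^ν * g t * S t ∂(σ k) = 0 := by
      have hI := ih hk1 hkm' j (by omega) hjm ν hν
      simp only [if_neg hjk] at hI
      simpa only [hgdef, hSdef] using hI
    have hexp : (fun t : ℝ => g t * ((∑ i ∈ Finset.range ν, (t:ℂ)^(ν-1-i) * c i)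
          - (t:ℂ)^ν * S t))
        = fun t : ℝ => (∑ i ∈ Finset.range ν, c i * ((t:ℂ)^(ν-1-i) * g t))
          - (t:ℂ)^ν * g t * S t := by
      funext t
      rw [mul_sub, Finset.mul_sum]
      have hterm : ∀ i ∈ Finset.range ν,
          g t * ((t:ℂ)^(ν-1-i) * c i) = c i * ((t:ℂ)^(ν-1-i) * g t) := fun i _ => by ring
      rw [Finset.sum_congr rfl hterm]
      ring
    have hint5 : ∀ i ∈ Finset.range ν,
        Integrable (fun t : ℝ => c i * ((t:ℂ)^(ν-1-i) * g t)) (σ k) := fun i _ =>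
      integrable_of_contOn hnull0 (continuousOn_const.mul
        (((Complex.continuous_ofReal.pow _).continuousOn).mul hgC))
    have hint3 : Integrable
        (fun t : ℝ => ∑ i ∈ Finset.range ν, c i * ((t:ℂ)^(ν-1-i) * g t)) (σ k) :=
      integrable_finset_sum _ hint5
    have hint4 : Integrable (fun t : ℝ => (t:ℂ)^ν * g t * S t) (σ k) :=
      integrable_of_contOn hnull0
        ((((Complex.continuous_ofReal.pow ν).continuousOn).mul hgC).mul hSC)
    rw [step1, step2, step3, hexp, integral_sub hint3 hint4, integral_finset_sum _ hint5, hIHj]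
    have hz1 : ∀ i ∈ Finset.range ν, ∫ t, c i * ((t:ℂ)^(ν-1-i) * g t) ∂(σ k) = 0 := by
      intro i hi
      rw [integral_const_mul, hIH0 (ν-1-i) (by omega), mul_zero]
    rw [Finset.sum_congr rfl hz1, Finset.sum_const_zero, sub_zero]
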